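/- Let Ψ ∈ ℝ^{M×K} be a matrix whose restricted isometry constant δ_{2s} satisfies δ_{2s} < √2 − 1, let c̄ ∈ ℝ^K be s-sparse, and let y = Ψc̄ (noiseless measurements). Then c̄ is the unique minimizer of ‖c‖₁ over the set {c ∈ ℝ^K : Ψc = y}; i.e., the recovery by ℓ₁ minimization is exact. -/

import Mathlib

open Finset

/-- Squared Euclidean (ℓ₂) norm. -/
noncomputable def l2sq {n : Type*} [Fintype n] (x : n → ℝ) : ℝ := ∑ i, (x i) ^ 2

/-- ℓ₁ norm. -/
noncomputable def l1 {n : Type*} [Fintype n] (x : n → ℝ) : ℝ := ∑ i, |x i|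

/-- ℓ₀ "norm": number of nonzero entries. -/
noncomputable def l0 {n : Type*} [Fintype n] (x : n → ℝ) : ℕ := Set.ncard {i | x i ≠ 0}

namespace RipAux

set_option linter.unusedSectionVars false

variable {n : Type*} [Fintype n] [DecidableEq n]

/-- Euclidean norm. -/
noncomputable def nrm {n : Type*} [Fintype n] (x : n → ℝ) : ℝ := Real.sqrt (l2sq x)

/-- Restriction of a vector to a finite index set. -/
def rst (S : Finset n) (x : n → ℝ) : n → ℝ := fun i => if i ∈ S then x i else 0

lemma l2sq_nonneg (x : n → ℝ) : 0 ≤ l2sq x :=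
  Finset.sum_nonneg fun i _ => sq_nonneg _

lemma nrm_nonneg (x : n → ℝ) : 0 ≤ nrm x := Real.sqrt_nonneg _

lemma sq_nrm (x : n → ℝ) : nrm x ^ 2 = l2sq x := Real.sq_sqrt (l2sq_nonneg x)

lemma l2sq_eq_zero {x : n → ℝ} (h : l2sq x = 0) : ∀ i, x i = 0 := by
  intro i
  have := (Finset.sum_eq_zero_iff_of_nonneg (fun j _ => sq_nonneg (x j))).1 h i (mem_univ i)
  exact pow_eq_zero_iff (by norm_num) |>.1 this

lemma l2sq_neg (x : n → ℝ) : l2sq (-x) = l2sq x := by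
  simp [l2sq]

lemma nrm_neg (x : n → ℝ) : nrm (-x) = nrm x := by rw [nrm, l2sq_neg]; rfl

lemma l2sq_smul (a : ℝ) (x : n → ℝ) : l2sq (a • x) = a ^ 2 * l2sq x := by
  simp [l2sq, Finset.mul_sum, mul_pow]

lemma l0_neg (x : n → ℝ) : l0 (-x) = l0 x := by
  simp [l0]

lemma l0_smul {a : ℝ} (ha : a ≠ 0) (x : n → ℝ) : l0 (a • x) = l0 x := by
  unfold l0
  congr 1
  ext i
  simp [ha]

lemma l0_add_le (x y : n → ℝ) : l0 (x + y) ≤ l0 x + l0 y := by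
  unfold l0
  have hsub : {i | (x + y) i ≠ 0} ⊆ {i | x i ≠ 0} ∪ {i | y i ≠ 0} := by
    intro i hi
    by_contra hc
    simp only [Set.mem_union, Set.mem_setOf_eq, not_or, not_not] at hc
    simp only [Set.mem_setOf_eq, Pi.add_apply] at hi
    exact hi (by rw [hc.1, hc.2, add_zero])
  calc {i | (x + y) i ≠ 0}.ncard ≤ ({i | x i ≠ 0} ∪ {i | y i ≠ 0}).ncard :=
        Set.ncard_le_ncard hsub (Set.toFinite _)
    _ ≤ _ := Set.ncard_union_le _ _

lemma l0_rst_le (S : Finset n) (x : n → ℝ) : l0 (rst S x) ≤ S.card := by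
  unfold l0 rst
  have hsub : {i | (if i ∈ S then x i else 0) ≠ 0} ⊆ (S : Set n) := by
    intro i hi
    simp only [Set.mem_setOf_eq] at hi
    by_contra hc
    simp only [Finset.mem_coe] at hc
    simp [hc] at hi
  calc _ ≤ (S : Set n).ncard := Set.ncard_le_ncard hsub (Set.toFinite _)
    _ = S.card := Set.ncard_coe_finset S

lemma l2sq_rst (S : Finset n) (x : n → ℝ) : l2sq (rst S x) = ∑ i ∈ S, x i ^ 2 := by
  unfold l2sq rst
  rw [show (∑ i, (if i ∈ S then x i else 0) ^ 2) = ∑ i, (if i ∈ S then x i ^ 2 else 0) by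
    apply Finset.sum_congr rfl; intro i _; split <;> simp]
  rw [Finset.sum_ite_mem, Finset.univ_inter]

lemma l2sq_add_of_disjoint {x y : n → ℝ} (h : ∀ i, x i = 0 ∨ y i = 0) :
    l2sq (x + y) = l2sq x + l2sq y := by
  unfold l2sq
  rw [← Finset.sum_add_distrib]
  apply Finset.sum_congr rfl
  intro i _
  rcases h i with h0 | h0 <;> simp [h0]

lemma l2sq_sub_of_disjoint {x y : n → ℝ} (h : ∀ i, x i = 0 ∨ y i = 0) :
    l2sq (x - y) = l2sq x + l2sq y := by
  rw [sub_eq_add_neg, l2sq_add_of_disjoint (fun i => by rcases h i with h0|h0 <;> simp [h0]),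
    l2sq_neg]

lemma dotProduct_sum {m : Type*} [Fintype m] {ι : Type*} (s : Finset ι) (u : m → ℝ)
    (v : ι → m → ℝ) : dotProduct u (∑ j ∈ s, v j) = ∑ j ∈ s, dotProduct u (v j) := by
  simp only [dotProduct, Finset.sum_apply, Finset.mul_sum]
  exact Finset.sum_comm

lemma mulVec_sum {M K : ℕ} (Ψ : Matrix (Fin M) (Fin K) ℝ) {ι : Type*} (s : Finset ι)
    (v : ι → Fin K → ℝ) : Ψ.mulVec (∑ j ∈ s, v j) = ∑ j ∈ s, Ψ.mulVec (v j) := by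
  simp only [← Matrix.mulVecLin_apply]
  exact map_sum _ _ _

lemma l2sq_mulVec_dot {M K : ℕ} (Ψ : Matrix (Fin M) (Fin K) ℝ) (x : Fin K → ℝ) :
    l2sq (Ψ.mulVec x) = dotProduct (Ψ.mulVec x) (Ψ.mulVec x) := by
  unfold l2sq dotProduct
  exact Finset.sum_congr rfl fun i _ => sq (Ψ.mulVec x i) ▸ (by ring)

/-- Restricted-isometry inner product bound for disjointly supported vectors. -/
lemma rip_ip {M K : ℕ} {s : ℕ} {Ψ : Matrix (Fin M) (Fin K) ℝ} {δ : ℝ} (hδ : 0 < δ)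
    (hRIP : ∀ c : Fin K → ℝ, l0 c ≤ 2 * s →
      (1 - δ) * l2sq c ≤ l2sq (Ψ.mulVec c) ∧ l2sq (Ψ.mulVec c) ≤ (1 + δ) * l2sq c)
    {x y : Fin K → ℝ} (hd : ∀ i, x i = 0 ∨ y i = 0)
    (hx : l0 x ≤ s) (hy : l0 y ≤ s) :
    dotProduct (Ψ.mulVec x) (Ψ.mulVec y) ≤ δ * nrm x * nrm y := by
  set a := nrm x with ha
  set b := nrm y with hb
  by_cases hx0 : l2sq x = 0
  · have : x = 0 := funext (l2sq_eq_zero hx0)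
    subst this
    simp only [Matrix.mulVec_zero, zero_dotProduct]
    exact mul_nonneg (mul_nonneg hδ.le (nrm_nonneg _)) (nrm_nonneg _)
  by_cases hy0 : l2sq y = 0
  · have : y = 0 := funext (l2sq_eq_zero hy0)
    subst this
    simp only [Matrix.mulVec_zero, dotProduct_zero]
    exact mul_nonneg (mul_nonneg hδ.le (nrm_nonneg _)) (nrm_nonneg _)
  have hapos : 0 < a := Real.sqrt_pos.2 (lt_of_le_of_ne (l2sq_nonneg x) (Ne.symm hx0))
  have hbpos : 0 < b := Real.sqrt_pos.2 (lt_of_le_of_ne (l2sq_nonneg y) (Ne.symm hy0))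
  have ha2 : a ^ 2 = l2sq x := sq_nrm x
  have hb2 : b ^ 2 = l2sq y := sq_nrm y
  set u := b • x + a • y with hu
  set v := b • x - a • y with hv
  have hdb : ∀ i, (b • x) i = 0 ∨ (a • y) i = 0 := by
    intro i
    rcases hd i with h0 | h0 <;> simp [h0]
  have hul0 : l0 u ≤ 2 * s := by
    calc l0 u ≤ l0 (b • x) + l0 (a • y) := l0_add_le _ _
      _ = l0 x + l0 y := by rw [l0_smul hbpos.ne' x, l0_smul hapos.ne' y]
      _ ≤ 2 * s := by omega
  have hvl0 : l0 v ≤ 2 * s := by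
    have : l0 v ≤ l0 (b • x) + l0 (-(a • y)) := by
      rw [hv, sub_eq_add_neg]; exact l0_add_le _ _
    rw [l0_neg, l0_smul hbpos.ne' x, l0_smul hapos.ne' y] at this
    omega
  have hul2 : l2sq u = 2 * (a * b) ^ 2 := by
    rw [hu, l2sq_add_of_disjoint hdb, l2sq_smul, l2sq_smul, ← ha2, ← hb2]; ring
  have hvl2 : l2sq v = 2 * (a * b) ^ 2 := by
    rw [hv, l2sq_sub_of_disjoint hdb, l2sq_smul, l2sq_smul, ← ha2, ← hb2]; ring
  obtain ⟨-, hup⟩ := hRIP u hul0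
  obtain ⟨hvl, -⟩ := hRIP v hvl0
  set P := Ψ.mulVec x with hP
  set Q := Ψ.mulVec y with hQ
  have hΨu : Ψ.mulVec u = b • P + a • Q := by
    rw [hu, Matrix.mulVec_add, Matrix.mulVec_smul, Matrix.mulVec_smul]
  have hΨv : Ψ.mulVec v = b • P - a • Q := by
    rw [hv, Matrix.mulVec_sub, Matrix.mulVec_smul, Matrix.mulVec_smul]
  have hkey : l2sq (Ψ.mulVec u) - l2sq (Ψ.mulVec v) = 4 * (a * b) * dotProduct P Q := by
    rw [hΨu, hΨv]
    unfold l2sq dotProduct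
    rw [← Finset.sum_sub_distrib, Finset.mul_sum]
    apply Finset.sum_congr rfl
    intro i _
    simp only [Pi.add_apply, Pi.sub_apply, Pi.smul_apply, smul_eq_mul]
    ring
  have hub : l2sq (Ψ.mulVec u) ≤ (1 + δ) * (2 * (a * b) ^ 2) := by rw [← hul2]; exact hup
  have hlb : (1 - δ) * (2 * (a * b) ^ 2) ≤ l2sq (Ψ.mulVec v) := by rw [← hvl2]; exact hvl
  have h4 : 4 * (a * b) * dotProduct P Q ≤ 4 * δ * (a * b) ^ 2 := by nlinarith
  have habpos : 0 < a * b := mul_pos hapos hbpos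
  nlinarith [h4]

end RipAux

set_option maxHeartbeats 1000000 in
/-- exact sparse recovery by ℓ₁ minimization under the RIP.
If the restricted isometry constant `δ_{2s}` of `Ψ` satisfies `δ_{2s} < √2 − 1`
(i.e. the RIP inequality of order `2s` holds for some constant `δ < √2 − 1`),
`c̄` is `s`-sparse and `y = Ψ c̄` is noiseless, then `c̄` is the unique minimizer
of `‖c‖₁` over `{c : Ψ c = y}`. -/
theorem rip_exact_l1_recovery {M K : ℕ} (s : ℕ) (Ψ : Matrix (Fin M) (Fin K) ℝ)
    (hRIP : ∃ δ : ℝ, 0 < δ ∧ δ < Real.sqrt 2 - 1 ∧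
      ∀ c : Fin K → ℝ, l0 c ≤ 2 * s →
        (1 - δ) * l2sq c ≤ l2sq (Ψ.mulVec c) ∧
          l2sq (Ψ.mulVec c) ≤ (1 + δ) * l2sq c)
    (cbar : Fin K → ℝ) (hsparse : l0 cbar ≤ s) :
    ∀ c : Fin K → ℝ, Ψ.mulVec c = Ψ.mulVec cbar → c ≠ cbar → l1 cbar < l1 c := by
  classical
  intro c hfeas hne
  by_contra hlt
  push_neg at hlt
  -- trivial case s = 0
  rcases Nat.eq_zero_or_pos s with hs0 | hspos
  · subst hs0
    have hcbar0 : cbar = 0 := by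
      funext i
      by_contra hci
      have h1 : {i | cbar i ≠ 0}.Nonempty := ⟨i, hci⟩
      have h2 : 0 < l0 cbar := by
        rw [l0]
        exact (Set.ncard_pos (Set.toFinite _)).2 h1
      omega
    have hc1 : l1 cbar = 0 := by simp [l1, hcbar0]
    rw [hc1] at hlt
    have hc0 : c = 0 := by
      funext i
      have h3 : ∀ j ∈ Finset.univ, (0:ℝ) ≤ |c j| := fun j _ => abs_nonneg _
      have := (Finset.sum_eq_zero_iff_of_nonneg h3).1 (le_antisymm hlt (Finset.sum_nonneg h3)) i
        (Finset.mem_univ i)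
      simpa using this
    exact hne (hc0.trans hcbar0.symm)
  obtain ⟨δ, hδpos, hδlt, hRIP⟩ := hRIP
  set h := c - cbar with hh
  have hΨh : Ψ.mulVec h = 0 := by
    rw [hh, Matrix.mulVec_sub, hfeas, sub_self]
  set T0 : Finset (Fin K) := Finset.univ.filter (fun i => cbar i ≠ 0) with hT0
  have hT0card : T0.card ≤ s := by
    have he : l0 cbar = T0.card := by
      rw [l0, Set.ncard_eq_toFinset_card']
      congr 1
      ext i
      simp [hT0]
    omega
  have hT0mem : ∀ i, i ∉ T0 → cbar i = 0 := by
    intro i hi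
    by_contra hci
    exact hi (Finset.mem_filter.2 ⟨Finset.mem_univ i, hci⟩)
  -- cone constraint
  have cone : ∑ i ∈ T0ᶜ, |h i| ≤ ∑ i ∈ T0, |h i| := by
    have h1 : l1 cbar = ∑ i ∈ T0, |cbar i| := by
      rw [l1, ← Finset.sum_add_sum_compl T0]
      have hz : ∑ i ∈ T0ᶜ, |cbar i| = 0 :=
        Finset.sum_eq_zero fun i hi => by rw [hT0mem i (Finset.mem_compl.1 hi), abs_zero]
      rw [hz, add_zero]
    have h2 : l1 c = ∑ i ∈ T0, |cbar i + h i| + ∑ i ∈ T0ᶜ, |h i| := by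
      rw [l1, ← Finset.sum_add_sum_compl T0]
      congr 1
      · exact Finset.sum_congr rfl fun i _ => by rw [hh]; congr 1; simp
      · exact Finset.sum_congr rfl fun i hi => by
          rw [hh]; simp [hT0mem i (Finset.mem_compl.1 hi)]
    have h3 : ∀ i ∈ T0, |cbar i| - |h i| ≤ |cbar i + h i| := by
      intro i _
      have := abs_sub_abs_le_abs_sub (cbar i) (-(h i))
      simp only [abs_neg, sub_neg_eq_add] at this
      linarith
    have h4 : ∑ i ∈ T0, (|cbar i| - |h i|) ≤ ∑ i ∈ T0, |cbar i + h i| := Finset.sum_le_sum h3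
    rw [Finset.sum_sub_distrib] at h4
    rw [h1, h2] at hlt
    linarith
  -- sorted list of T0ᶜ by decreasing |h|
  set ble : Fin K → Fin K → Bool := fun i j => decide (|h j| ≤ |h i|) with hle
  set l : List (Fin K) := T0ᶜ.toList.mergeSort ble with hl
  have hlperm : l.Perm T0ᶜ.toList := List.mergeSort_perm _ _
  have hlnd : l.Nodup := hlperm.nodup_iff.2 (Finset.nodup_toList _)
  have hltf : l.toFinset = T0ᶜ := by
    rw [List.toFinset_eq_of_perm _ _ hlperm, Finset.toList_toFinset]
  have hlsorted : l.Pairwise (fun i j => |h j| ≤ |h i|) := by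
    have htr : ∀ (x y z : Fin K), ble x y = true → ble y z = true → ble x z = true := by
      intro x y z hxy hyz
      simp only [hle, decide_eq_true_eq] at *
      exact le_trans hyz hxy
    have hto : ∀ (x y : Fin K), (ble x y || ble y x) = true := by
      intro x y
      simp only [hle, Bool.or_eq_true, decide_eq_true_eq]
      exact le_total _ _
    have := List.pairwise_mergeSort htr hto T0ᶜ.toList
    rw [← hl] at this
    exact this.imp (fun {x y} hxy => by
      simpa only [hle, decide_eq_true_eq] using hxy)
  set L := l.length with hLdef
  set n := L / s + 1 with hn
  have hns : L ≤ n * s := by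
    have h1 : L % s < s := Nat.mod_lt L hspos
    have h2 : L / s * s + L % s = L := Nat.div_add_mod' L s
    rw [hn, Nat.add_mul, one_mul]
    omega
  set lc : ℕ → List (Fin K) := fun j => (l.drop (j*s)).take s with hlc
  set C : ℕ → Finset (Fin K) := fun j => (lc j).toFinset with hC
  have hlc_sub : ∀ j, List.Sublist (lc j) l := fun j => (List.take_sublist _ _).trans (List.drop_sublist _ _)
  have hlc_nd : ∀ j, (lc j).Nodup := fun j => (hlc_sub j).nodup hlnd
  have hCsub : ∀ j, C j ⊆ T0ᶜ := by
    intro j i hi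
    rw [← hltf]
    exact List.mem_toFinset.2 ((hlc_sub j).subset (List.mem_toFinset.1 hi))
  have hCcard : ∀ j, (C j).card = min s (L - j*s) := by
    intro j
    rw [hC, List.toFinset_card_of_nodup (hlc_nd j)]
    simp [hlc, List.length_take, List.length_drop]
    rfl
  have htake : ∀ j, List.Sublist (lc j) (l.take ((j+1)*s)) := by
    intro j
    rw [Nat.succ_mul, List.take_add]
    exact List.sublist_append_right _ _
  have hdroplc : ∀ j j', j < j' → List.Sublist (lc j') (l.drop ((j+1)*s)) := by
    intro j j' hjj'
    have h1 : List.Sublist (lc j') (l.drop (j'*s)) := List.take_sublist _ _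
    have hmul : (j+1)*s ≤ j'*s := Nat.mul_le_mul_right s hjj'
    have h2 : l.drop (j'*s) = (l.drop ((j+1)*s)).drop (j'*s - (j+1)*s) := by
      rw [List.drop_drop]
      congr 1
      omega
    rw [h2] at h1
    exact h1.trans (List.drop_sublist _ _)
  have hndsplit : ∀ m : ℕ, (l.take m ++ l.drop m).Nodup := by
    intro m; rw [List.take_append_drop]; exact hlnd
  have hdisjC : ∀ j j', j < j' → Disjoint (C j) (C j') := by
    intro j j' hjj'
    rw [Finset.disjoint_left]
    intro i hij hij'
    have h1 : i ∈ l.take ((j+1)*s) := (htake j).subset (List.mem_toFinset.1 hij)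
    have h2 : i ∈ l.drop ((j+1)*s) := (hdroplc j j' hjj').subset (List.mem_toFinset.1 hij')
    exact (List.nodup_append.1 (hndsplit ((j+1)*s))).2.2 i h1 i h2 rfl
  have hmono : ∀ j, ∀ i ∈ C (j+1), ∀ b ∈ C j, |h i| ≤ |h b| := by
    intro j i hij b hbj
    have hp : (l.take ((j+1)*s) ++ l.drop ((j+1)*s)).Pairwise (fun x y => |h y| ≤ |h x|) := by
      rw [List.take_append_drop]; exact hlsorted
    have hb : b ∈ l.take ((j+1)*s) := (htake j).subset (List.mem_toFinset.1 hbj)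
    have hi' : i ∈ l.drop ((j+1)*s) :=
      (List.take_sublist _ _).subset (List.mem_toFinset.1 hij)
    exact (List.pairwise_append.1 hp).2.2 b hb i hi'
  have hCfull : ∀ j, (C (j+1)).Nonempty → (C j).card = s := by
    intro j hne'
    have h1 : 0 < (C (j+1)).card := Finset.card_pos.2 hne'
    rw [hCcard] at h1 ⊢
    have hsm : (j+1)*s = j*s + s := Nat.succ_mul j s
    omega
  have hunion : (Finset.range n).biUnion C = T0ᶜ := by
    have key : ∀ m, (Finset.range m).biUnion C = (l.take (m*s)).toFinset := by
      intro m
      induction m with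
      | zero => simp
      | succ m ih =>
        rw [Finset.range_add_one, Finset.biUnion_insert, ih, Nat.succ_mul, List.take_add,
          List.toFinset_append]
        exact Finset.union_comm _ _
    rw [key n, List.take_of_length_le hns]
    exact hltf
  -- decomposition of h
  have hdecomp : h = RipAux.rst T0 h + ∑ j ∈ Finset.range n, RipAux.rst (C j) h := by
    funext i
    simp only [Pi.add_apply, Finset.sum_apply]
    by_cases hi : i ∈ T0
    · have hz : ∀ j ∈ Finset.range n, RipAux.rst (C j) h i = 0 := by
        intro j _
        have : i ∉ C j := fun hic => (Finset.mem_compl.1 (hCsub j hic)) hi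
        simp [RipAux.rst, this]
      rw [Finset.sum_eq_zero hz]
      simp [RipAux.rst, hi]
    · have hic : i ∈ (Finset.range n).biUnion C := by
        rw [hunion]; exact Finset.mem_compl.2 hi
      obtain ⟨j₀, hj₀, hij₀⟩ := Finset.mem_biUnion.1 hic
      rw [Finset.sum_eq_single_of_mem j₀ hj₀ (fun j hj hjne => by
        have : i ∉ C j := by
          rcases hjne.lt_or_gt with hlt' | hlt'
          · exact fun hic' => (Finset.disjoint_left.1 (hdisjC j j₀ hlt')) hic' hij₀
          · exact fun hic' => (Finset.disjoint_left.1 (hdisjC j₀ j hlt')) hij₀ hic'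
        simp [RipAux.rst, this])]
      simp [RipAux.rst, hi, hij₀]
  -- the two head pieces
  set a := RipAux.nrm (RipAux.rst T0 h) with hadef
  set b := RipAux.nrm (RipAux.rst (C 0) h) with hbdef
  set g := RipAux.rst T0 h + RipAux.rst (C 0) h with hgdef
  have hann : 0 ≤ a := RipAux.nrm_nonneg _
  have hbnn : 0 ≤ b := RipAux.nrm_nonneg _
  have hdisjT0C : ∀ j, ∀ i : Fin K, RipAux.rst T0 h i = 0 ∨ RipAux.rst (C j) h i = 0 := by
    intro j i
    by_cases hi : i ∈ T0
    · right
      have : i ∉ C j := fun hic => (Finset.mem_compl.1 (hCsub j hic)) hi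
      simp [RipAux.rst, this]
    · left; simp [RipAux.rst, hi]
  have hdisjCC : ∀ j j', j ≠ j' → ∀ i : Fin K,
      RipAux.rst (C j) h i = 0 ∨ RipAux.rst (C j') h i = 0 := by
    intro j j' hjj' i
    by_cases hi : i ∈ C j
    · right
      have : i ∉ C j' := by
        rcases hjj'.lt_or_gt with hlt' | hlt'
        · exact fun hic' => (Finset.disjoint_left.1 (hdisjC j j' hlt')) hi hic'
        · exact fun hic' => (Finset.disjoint_left.1 (hdisjC j' j hlt')) hic' hi
      simp [RipAux.rst, this]
    · left; simp [RipAux.rst, hi]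
  have hg2 : l2sq g = a^2 + b^2 := by
    rw [hgdef, RipAux.l2sq_add_of_disjoint (hdisjT0C 0), ← RipAux.sq_nrm, ← RipAux.sq_nrm]
  have hCcard_le : ∀ j, (C j).card ≤ s := fun j => by rw [hCcard]; omega
  have hg0 : l0 g ≤ 2*s := by
    calc l0 g ≤ l0 (RipAux.rst T0 h) + l0 (RipAux.rst (C 0) h) := RipAux.l0_add_le _ _
      _ ≤ T0.card + (C 0).card := add_le_add (RipAux.l0_rst_le _ _) (RipAux.l0_rst_le _ _)
      _ ≤ 2*s := by have := hCcard_le 0; omega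
  have hl0T0 : l0 (RipAux.rst T0 h) ≤ s := le_trans (RipAux.l0_rst_le _ _) hT0card
  have hl0C : ∀ j, l0 (RipAux.rst (C j) h) ≤ s :=
    fun j => le_trans (RipAux.l0_rst_le _ _) (hCcard_le j)
  have hsposR : (0:ℝ) < s := by exact_mod_cast hspos
  have hsqrts : (0:ℝ) < Real.sqrt s := Real.sqrt_pos.2 hsposR
  -- tail bound
  have hstep : ∀ j, RipAux.nrm (RipAux.rst (C (j+1)) h) ≤ (∑ i ∈ C j, |h i|) / Real.sqrt s := by
    intro j
    rcases Finset.eq_empty_or_nonempty (C (j+1)) with hemp | hne'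
    · have hz : RipAux.rst (C (j+1)) h = 0 := by
        funext i; simp [RipAux.rst, hemp]
      rw [hz]
      have : RipAux.nrm (0 : Fin K → ℝ) = 0 := by simp [RipAux.nrm, l2sq]
      rw [this]
      positivity
    · have hcard : (C j).card = s := hCfull j hne'
      set Lj := ∑ i ∈ C j, |h i| with hLj
      have hLjnn : 0 ≤ Lj := Finset.sum_nonneg fun i _ => abs_nonneg _
      have hbound : ∀ i ∈ C (j+1), |h i| ≤ Lj / s := by
        intro i hi
        have h1 : (C j).card • |h i| ≤ ∑ b ∈ C j, |h b| :=
          Finset.card_nsmul_le_sum _ _ _ (fun b hb => hmono j i hi b hb)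
        rw [hcard, nsmul_eq_mul] at h1
        rw [le_div_iff₀ hsposR, mul_comm]
        exact h1
      have hl2 : l2sq (RipAux.rst (C (j+1)) h) ≤ s * (Lj / s)^2 := by
        rw [RipAux.l2sq_rst]
        calc ∑ i ∈ C (j+1), h i ^ 2 ≤ ∑ _i ∈ C (j+1), (Lj/s)^2 := by
              apply Finset.sum_le_sum
              intro i hi
              calc h i ^ 2 = |h i|^2 := (sq_abs _).symm
                _ ≤ (Lj/s)^2 := pow_le_pow_left₀ (abs_nonneg _) (hbound i hi) 2
          _ = ((C (j+1)).card : ℝ) * (Lj/s)^2 := by rw [Finset.sum_const, nsmul_eq_mul]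
          _ ≤ s * (Lj/s)^2 := by
              apply mul_le_mul_of_nonneg_right _ (by positivity)
              exact_mod_cast hCcard_le (j+1)
      calc RipAux.nrm (RipAux.rst (C (j+1)) h) ≤ Real.sqrt (s * (Lj/s)^2) :=
            Real.sqrt_le_sqrt hl2
        _ = Lj / Real.sqrt s := by
            rw [Real.sqrt_mul hsposR.le, Real.sqrt_sq (by positivity)]
            rw [eq_div_iff hsqrts.ne']
            have hss : Real.sqrt s * Real.sqrt s = s := Real.mul_self_sqrt hsposR.le
            field_simp
            nlinarith [hss]
  -- Cauchy-Schwarz on T0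
  have hCS : ∑ i ∈ T0, |h i| ≤ Real.sqrt s * a := by
    have h1 : (∑ i ∈ T0, |h i|)^2 ≤ (T0.card : ℝ) * ∑ i ∈ T0, |h i|^2 :=
      sq_sum_le_card_mul_sum_sq
    have h2 : ∑ i ∈ T0, |h i|^2 = l2sq (RipAux.rst T0 h) := by
      rw [RipAux.l2sq_rst]
      exact Finset.sum_congr rfl fun i _ => sq_abs _
    have h3 : (∑ i ∈ T0, |h i|)^2 ≤ (s : ℝ) * a^2 := by
      rw [h2, ← RipAux.sq_nrm, ← hadef] at h1
      calc (∑ i ∈ T0, |h i|)^2 ≤ (T0.card : ℝ) * a^2 := h1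
        _ ≤ (s:ℝ) * a^2 := by
            apply mul_le_mul_of_nonneg_right _ (sq_nonneg _)
            exact_mod_cast hT0card
    have h4 : (0:ℝ) ≤ ∑ i ∈ T0, |h i| := Finset.sum_nonneg fun i _ => abs_nonneg _
    calc ∑ i ∈ T0, |h i| = Real.sqrt ((∑ i ∈ T0, |h i|)^2) := (Real.sqrt_sq h4).symm
      _ ≤ Real.sqrt ((s:ℝ) * a^2) := Real.sqrt_le_sqrt h3
      _ = Real.sqrt s * a := by
          rw [Real.sqrt_mul hsposR.le, Real.sqrt_sq hann]
  -- sum of tail norms bounded by a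
  have hS : ∑ j ∈ Finset.Ico 1 n, RipAux.nrm (RipAux.rst (C j) h) ≤ a := by
    have hre : ∑ j ∈ Finset.Ico 1 n, RipAux.nrm (RipAux.rst (C j) h)
        = ∑ j ∈ Finset.range (n-1), RipAux.nrm (RipAux.rst (C (1+j)) h) :=
      Finset.sum_Ico_eq_sum_range _ 1 n
    have hpd : (↑(Finset.range n) : Set ℕ).PairwiseDisjoint C := by
      intro j _ j' _ hjj'
      rcases hjj'.lt_or_gt with hlt' | hlt'
      · exact hdisjC j j' hlt'
      · exact (hdisjC j' j hlt').symm
    calc ∑ j ∈ Finset.Ico 1 n, RipAux.nrm (RipAux.rst (C j) h)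
        = ∑ j ∈ Finset.range (n-1), RipAux.nrm (RipAux.rst (C (1+j)) h) := hre
      _ ≤ ∑ j ∈ Finset.range (n-1), (∑ i ∈ C j, |h i|) / Real.sqrt s := by
          apply Finset.sum_le_sum
          intro j _
          rw [add_comm 1 j]
          exact hstep j
      _ ≤ ∑ j ∈ Finset.range n, (∑ i ∈ C j, |h i|) / Real.sqrt s := by
          apply Finset.sum_le_sum_of_subset_of_nonneg
            (Finset.range_subset_range.2 (Nat.sub_le n 1))
          intro j _ _
          positivity
      _ = (∑ j ∈ Finset.range n, ∑ i ∈ C j, |h i|) / Real.sqrt s := by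
          rw [Finset.sum_div]
      _ = (∑ i ∈ T0ᶜ, |h i|) / Real.sqrt s := by
          rw [← hunion, Finset.sum_biUnion hpd]
      _ ≤ (∑ i ∈ T0, |h i|) / Real.sqrt s := by
          gcongr
      _ ≤ (Real.sqrt s * a) / Real.sqrt s := by
          gcongr
      _ = a := by
          rw [mul_comm, mul_div_assoc, div_self hsqrts.ne', mul_one]
  -- express Ψ g via tail
  have hgdecomp : h = g + ∑ j ∈ Finset.Ico 1 n, RipAux.rst (C j) h := by
    have hsplit : ∑ j ∈ Finset.range n, RipAux.rst (C j) h
        = RipAux.rst (C 0) h + ∑ j ∈ Finset.Ico 1 n, RipAux.rst (C j) h := by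
      rw [Finset.range_eq_Ico, Finset.sum_eq_sum_Ico_succ_bot
        (by rw [hn]; exact Nat.succ_pos _ : 0 < n)]
    conv_lhs => rw [hdecomp]
    rw [hsplit, hgdef, add_assoc]
  have hΨg : Ψ.mulVec g = ∑ j ∈ Finset.Ico 1 n, Ψ.mulVec (-(RipAux.rst (C j) h)) := by
    have h1 : (0 : Fin M → ℝ) = Ψ.mulVec g + ∑ j ∈ Finset.Ico 1 n,
        Ψ.mulVec (RipAux.rst (C j) h) := by
      rw [← hΨh]
      conv_lhs => rw [hgdecomp]
      rw [Matrix.mulVec_add, RipAux.mulVec_sum]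
    have h2 : Ψ.mulVec g = -∑ j ∈ Finset.Ico 1 n, Ψ.mulVec (RipAux.rst (C j) h) :=
      eq_neg_of_add_eq_zero_left h1.symm
    rw [h2, ← Finset.sum_neg_distrib]
    exact Finset.sum_congr rfl fun j _ => (Matrix.mulVec_neg _ _).symm
  -- inner product bound
  have hip : l2sq (Ψ.mulVec g) ≤ δ * (a + b) * a := by
    have hgsplitΨ : Ψ.mulVec g = Ψ.mulVec (RipAux.rst T0 h) + Ψ.mulVec (RipAux.rst (C 0) h) := by
      rw [hgdef, Matrix.mulVec_add]
    have hterm : ∀ j ∈ Finset.Ico 1 n,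
        dotProduct (Ψ.mulVec g) (Ψ.mulVec (-(RipAux.rst (C j) h)))
          ≤ δ * (a + b) * RipAux.nrm (RipAux.rst (C j) h) := by
      intro j hj
      have hj1 : 1 ≤ j := (Finset.mem_Ico.1 hj).1
      have hd1 : ∀ i : Fin K, RipAux.rst T0 h i = 0 ∨ (-(RipAux.rst (C j) h)) i = 0 := by
        intro i
        rcases hdisjT0C j i with h0 | h0
        · left; exact h0
        · right; simp [h0]
      have hd2 : ∀ i : Fin K, RipAux.rst (C 0) h i = 0 ∨ (-(RipAux.rst (C j) h)) i = 0 := by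
        intro i
        rcases hdisjCC 0 j (by omega) i with h0 | h0
        · left; exact h0
        · right; simp [h0]
      have hl0neg : l0 (-(RipAux.rst (C j) h)) ≤ s := by
        rw [RipAux.l0_neg]; exact hl0C j
      have e1 := RipAux.rip_ip hδpos hRIP hd1 hl0T0 hl0neg
      have e2 := RipAux.rip_ip hδpos hRIP hd2 (hl0C 0) hl0neg
      rw [RipAux.nrm_neg] at e1 e2
      rw [hgsplitΨ, add_dotProduct]
      rw [← hadef] at e1
      rw [← hbdef] at e2
      have := add_le_add e1 e2
      calc dotProduct (Ψ.mulVec (RipAux.rst T0 h)) (Ψ.mulVec (-(RipAux.rst (C j) h)))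
            + dotProduct (Ψ.mulVec (RipAux.rst (C 0) h))
              (Ψ.mulVec (-(RipAux.rst (C j) h)))
          ≤ δ * a * RipAux.nrm (RipAux.rst (C j) h) + δ * b * RipAux.nrm (RipAux.rst (C j) h) :=
            this
        _ = δ * (a + b) * RipAux.nrm (RipAux.rst (C j) h) := by ring
    have hsum : l2sq (Ψ.mulVec g)
        ≤ ∑ j ∈ Finset.Ico 1 n, δ * (a + b) * RipAux.nrm (RipAux.rst (C j) h) := by
      rw [RipAux.l2sq_mulVec_dot]
      calc dotProduct (Ψ.mulVec g) (Ψ.mulVec g)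
          = ∑ j ∈ Finset.Ico 1 n,
              dotProduct (Ψ.mulVec g) (Ψ.mulVec (-(RipAux.rst (C j) h))) := by
            nth_rewrite 2 [hΨg]
            rw [RipAux.dotProduct_sum]
        _ ≤ _ := Finset.sum_le_sum hterm
    calc l2sq (Ψ.mulVec g) ≤ ∑ j ∈ Finset.Ico 1 n, δ * (a + b) * RipAux.nrm (RipAux.rst (C j) h) :=
          hsum
      _ = δ * (a + b) * ∑ j ∈ Finset.Ico 1 n, RipAux.nrm (RipAux.rst (C j) h) := by
          rw [Finset.mul_sum]
      _ ≤ δ * (a + b) * a := by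
          apply mul_le_mul_of_nonneg_left hS
          positivity
  -- conclude g = 0
  have hq2 : RipAux.nrm g ^ 2 = a^2 + b^2 := by rw [RipAux.sq_nrm, hg2]
  have hqnn : 0 ≤ RipAux.nrm g := RipAux.nrm_nonneg _
  have haq : a ≤ RipAux.nrm g := by
    nlinarith [sq_nonneg b, hq2]
  have hab : a + b ≤ Real.sqrt 2 * RipAux.nrm g := by
    have h1 : (a+b)^2 ≤ (Real.sqrt 2 * RipAux.nrm g)^2 := by
      have h2 : (Real.sqrt 2)^2 = 2 := Real.sq_sqrt (by norm_num)
      nlinarith [hq2, sq_nonneg (a - b)]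
    calc a + b = Real.sqrt ((a+b)^2) := (Real.sqrt_sq (by positivity)).symm
      _ ≤ Real.sqrt ((Real.sqrt 2 * RipAux.nrm g)^2) := Real.sqrt_le_sqrt h1
      _ = Real.sqrt 2 * RipAux.nrm g := Real.sqrt_sq (by positivity)
  have hupper : l2sq (Ψ.mulVec g) ≤ Real.sqrt 2 * δ * l2sq g := by
    have h1 : δ * (a + b) * a ≤ δ * (Real.sqrt 2 * RipAux.nrm g) * RipAux.nrm g := by
      apply mul_le_mul (mul_le_mul_of_nonneg_left hab hδpos.le) haq hann
      positivity
    calc l2sq (Ψ.mulVec g) ≤ δ * (a + b) * a := hip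
      _ ≤ δ * (Real.sqrt 2 * RipAux.nrm g) * RipAux.nrm g := h1
      _ = Real.sqrt 2 * δ * (RipAux.nrm g)^2 := by ring
      _ = Real.sqrt 2 * δ * l2sq g := by rw [RipAux.sq_nrm]
  have hlower : (1 - δ) * l2sq g ≤ l2sq (Ψ.mulVec g) := (hRIP g hg0).1
  have hcoef : Real.sqrt 2 * δ < 1 - δ := by
    have h2 : Real.sqrt 2 ^ 2 = 2 := Real.sq_sqrt (by norm_num)
    have h2pos : 0 < Real.sqrt 2 := Real.sqrt_pos.2 (by norm_num)
    nlinarith [mul_lt_mul_of_pos_left hδlt (show (0:ℝ) < Real.sqrt 2 + 1 by positivity)]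
  have hgzero : l2sq g = 0 := by
    have hnn := RipAux.l2sq_nonneg g
    nlinarith [hupper, hlower, hcoef, hnn]
  have hgz : ∀ i, g i = 0 := RipAux.l2sq_eq_zero hgzero
  have hT0zero : ∀ i ∈ T0, h i = 0 := by
    intro i hi
    have := hgz i
    have hnC : i ∉ C 0 := fun hic => (Finset.mem_compl.1 (hCsub 0 hic)) hi
    simp only [hgdef, Pi.add_apply, RipAux.rst, hi, if_pos, hnC, if_neg] at this
    simpa [hi, hnC] using this
  have hT0czero : ∀ i ∈ T0ᶜ, h i = 0 := by
    have hz : ∑ i ∈ T0, |h i| = 0 :=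
      Finset.sum_eq_zero fun i hi => by rw [hT0zero i hi, abs_zero]
    have hzc : ∑ i ∈ T0ᶜ, |h i| ≤ 0 := by rw [← hz]; exact cone
    intro i hi
    have := (Finset.sum_eq_zero_iff_of_nonneg (fun j _ => abs_nonneg (h j))).1
      (le_antisymm hzc (Finset.sum_nonneg fun j _ => abs_nonneg _)) i hi
    exact abs_eq_zero.1 this
  have hzero : h = 0 := by
    funext i
    by_cases hi : i ∈ T0
    · exact hT0zero i hi
    · exact hT0czero i (Finset.mem_compl.2 hi)
  exact hne (by rw [← sub_eq_zero]; exact hzero)
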